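/- Let A : ℝ → ℝ^{m×n} be differentiable with derivative A'(t). Let Û ∈ ℝ^{m×k} and V̂ ∈ ℝ^{n×k} have orthonormal columns and satisfy Û Ûᵀ A(t1) = A(t1) and A(t1) V̂ V̂ᵀ = A(t1). Let Ŝ : ℝ → ℝ^{k×k} be differentiable with Ŝ(t0) = Ûᵀ A(t0) V̂ and Ŝ'(t) = Ûᵀ A'(t) V̂ for all t ∈ [t0, t1]. Then Û Ŝ(t1) V̂ᵀ = A(t1), i.e., the Galerkin step reproduces A(t1) exactly. -/

import Mathlib

open Matrix

/-- Exactness (Theorem 1): if `Û Ûᵀ A(t₁) = A(t₁)` and `A(t₁) V̂ V̂ᵀ = A(t₁)` and `Ŝ` solves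
the S-step ODE with right-hand side `Ûᵀ A'(t) V̂` and initial value `Ûᵀ A(t₀) V̂`, then the
Galerkin step reproduces `A(t₁)` exactly: `Û Ŝ(t₁) V̂ᵀ = A(t₁)`. -/
theorem galerkin_step_exact
    {m n k : ℕ} {t0 t1 : ℝ}
    (A : ℝ → Matrix (Fin m) (Fin n) ℝ) (A' : ℝ → Matrix (Fin m) (Fin n) ℝ)
    (Uhat : Matrix (Fin m) (Fin k) ℝ) (Vhat : Matrix (Fin n) (Fin k) ℝ)
    (Shat : ℝ → Matrix (Fin k) (Fin k) ℝ)
    (ht : t0 ≤ t1)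
    (hA : ∀ t ∈ Set.Icc t0 t1, ∀ i j, HasDerivAt (fun s => A s i j) (A' t i j) t)
    (hU : Uhatᵀ * Uhat = 1) (hV : Vhatᵀ * Vhat = 1)
    (hUA : Uhat * Uhatᵀ * A t1 = A t1)
    (hAV : A t1 * Vhat * Vhatᵀ = A t1)
    (hS0 : Shat t0 = Uhatᵀ * A t0 * Vhat)
    (hS : ∀ t ∈ Set.Icc t0 t1, ∀ i j,
      HasDerivAt (fun s => Shat s i j) ((Uhatᵀ * A' t * Vhat) i j) t) :
    Uhat * Shat t1 * Vhatᵀ = A t1 := by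
  -- derivative of (Uᵀ A s V) i j
  have hUAV : ∀ t ∈ Set.Icc t0 t1, ∀ i j,
      HasDerivAt (fun s => (Uhatᵀ * A s * Vhat) i j) ((Uhatᵀ * A' t * Vhat) i j) t := by
    intro t htmem i j
    have : ∀ s, (Uhatᵀ * A s * Vhat) i j
        = ∑ p, ∑ q, Uhatᵀ i p * A s p q * Vhat q j := by
      intro s
      simp [Matrix.mul_apply, Finset.sum_mul]
      exact Finset.sum_comm
    simp only [this]
    have h2 : (Uhatᵀ * A' t * Vhat) i j
        = ∑ p, ∑ q, Uhatᵀ i p * A' t p q * Vhat q j := by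
      simp [Matrix.mul_apply, Finset.sum_mul]
      exact Finset.sum_comm
    rw [h2]
    apply HasDerivAt.fun_sum
    intro p _
    apply HasDerivAt.fun_sum
    intro q _
    have := (hA t htmem p q).const_mul (Uhatᵀ i p)
    have := this.mul_const (Vhat q j)
    simpa [mul_assoc] using this
  -- the difference has zero derivative, hence is constant on [t0, t1]
  have key : ∀ i j, Shat t1 i j = (Uhatᵀ * A t1 * Vhat) i j := by
    intro i j
    set g : ℝ → ℝ := fun s => Shat s i j - (Uhatᵀ * A s * Vhat) i j with hg
    have hderiv : ∀ t ∈ Set.Icc t0 t1, HasDerivAt g 0 t := by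
      intro t htmem
      have := (hS t htmem i j).fun_sub (hUAV t htmem i j)
      simpa using this
    have hcont : ContinuousOn g (Set.Icc t0 t1) := fun t htmem =>
      (hderiv t htmem).continuousAt.continuousWithinAt
    have hconst : ∀ x ∈ Set.Icc t0 t1, g x = g t0 := by
      apply constant_of_has_deriv_right_zero hcont
      intro x hx
      exact (hderiv x (Set.mem_Icc.mpr ⟨hx.1, le_of_lt hx.2⟩)).hasDerivWithinAt
    have h1 := hconst t1 (Set.mem_Icc.mpr ⟨ht, le_refl t1⟩)
    have h0 : g t0 = 0 := by simp [hg, hS0]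
    have : g t1 = 0 := h1.trans h0
    simpa [hg, sub_eq_zero] using this
  have hS1 : Shat t1 = Uhatᵀ * A t1 * Vhat := by
    ext i j; exact key i j
  rw [hS1]
  calc Uhat * (Uhatᵀ * A t1 * Vhat) * Vhatᵀ
      = (Uhat * Uhatᵀ * A t1) * Vhat * Vhatᵀ := by simp only [Matrix.mul_assoc]
    _ = A t1 := by rw [hUA, hAV]
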